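/- Let G be an unweighted simple graph, let e be an edge of G, and let C be a shortest cycle of G containing e (a short cycle for e). Let x and y be two distinct vertices on C. Then x and y split C into two edge-disjoint x–y paths C_e and C_ē, where C_e contains e and C_ē avoids e, and moreover: the length of C_e equals the minimum length of an x–y path in G containing edge e, and the length of C_ē equals the minimum length of an x–y path in G avoiding edge e. -/

import Mathlib

open SimpleGraph

private lemma split_walk_at_edge {V : Type*} {G : SimpleGraph V} {a b : V} :
    ∀ {s t : V} (D : G.Walk s t), s(a,b) ∈ D.edges →
      (∃ (W1 : G.Walk s a) (W2 : G.Walk b t),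
        D.edges = W1.edges ++ s(a,b) :: W2.edges) ∨
      (∃ (W1 : G.Walk s b) (W2 : G.Walk a t),
        D.edges = W1.edges ++ s(a,b) :: W2.edges) := by
  intro s t D
  induction D with
  | nil => simp
  | @cons s c t h D ih =>
    intro he
    rw [Walk.edges_cons, List.mem_cons] at he
    rcases he with he | he
    · rw [Sym2.eq_iff] at he
      rcases he with ⟨rfl, rfl⟩ | ⟨rfl, rfl⟩
      · exact Or.inl ⟨Walk.nil, D, by simp⟩
      · exact Or.inr ⟨Walk.nil, D, by simp [Sym2.eq_swap]⟩
    · rcases ih he with ⟨W1, W2, hW⟩ | ⟨W1, W2, hW⟩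
      · exact Or.inl ⟨Walk.cons h W1, W2, by simp [hW]⟩
      · exact Or.inr ⟨Walk.cons h W1, W2, by simp [hW]⟩

private lemma cycle_from_closed_walk {V : Type*} [DecidableEq V] {G : SimpleGraph V}
    {u v b : V} (huv : G.Adj u v) (D : G.Walk b b)
    (hcount : D.edges.count s(u,v) = 1) :
    ∃ (c : V) (E : G.Walk c c), E.IsCycle ∧ s(u,v) ∈ E.edges ∧ E.length ≤ D.length := by
  have he : s(u,v) ∈ D.edges := List.count_pos_iff.mp (by omega)
  rcases split_walk_at_edge D he with ⟨W1, W2, hW⟩ | ⟨W1, W2, hW⟩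
  · have h1 : s(u,v) ∉ W1.edges ∧ s(u,v) ∉ W2.edges := by
      rw [hW, List.count_append, List.count_cons_self] at hcount
      constructor <;> intro hmem <;>
        have := List.count_pos_iff.mpr hmem <;> omega
    have hlen : W1.length + 1 + W2.length = D.length := by
      have := congrArg List.length hW
      simp [Walk.length_edges] at this; omega
    set R : G.Walk v u := W2.append W1 with hR
    have heR : s(u,v) ∉ R.edges := by
      rw [hR, Walk.edges_append]
      simp [h1.1, h1.2]
    set p := R.bypass with hp
    have hpe : s(u,v) ∉ p.edges := fun h => heR (R.edges_bypass_subset h)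
    refine ⟨u, Walk.cons huv p, ?_, ?_, ?_⟩
    · exact (Walk.cons_isCycle_iff p huv).mpr ⟨R.bypass_isPath, hpe⟩
    · simp
    · have : p.length ≤ R.length := R.length_bypass_le
      have hRlen : R.length = W2.length + W1.length := by simp [hR]
      simp only [Walk.length_cons]
      omega
  · have h1 : s(u,v) ∉ W1.edges ∧ s(u,v) ∉ W2.edges := by
      rw [hW, List.count_append, List.count_cons_self] at hcount
      constructor <;> intro hmem <;>
        have := List.count_pos_iff.mpr hmem <;> omega
    have hlen : W1.length + 1 + W2.length = D.length := by
      have := congrArg List.length hW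
      simp [Walk.length_edges] at this; omega
    set R : G.Walk u v := W2.append W1 with hR
    have heR : s(u,v) ∉ R.edges := by
      rw [hR, Walk.edges_append]
      simp [h1.1, h1.2]
    set p := R.bypass with hp
    have hpe : s(v,u) ∉ p.edges := by rw [Sym2.eq_swap]; exact fun h => heR (R.edges_bypass_subset h)
    refine ⟨v, Walk.cons huv.symm p, ?_, ?_, ?_⟩
    · exact (Walk.cons_isCycle_iff p huv.symm).mpr ⟨R.bypass_isPath, hpe⟩
    · simp [Sym2.eq_swap]
    · have : p.length ≤ R.length := R.length_bypass_le
      have hRlen : R.length = W2.length + W1.length := by simp [hR]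
      simp only [Walk.length_cons]
      omega

private lemma closed_bound {V : Type*} [DecidableEq V] {G : SimpleGraph V} {u v x y : V}
    (huv : G.Adj u v) {n : ℕ}
    (hshort : ∀ (b : V) (E : G.Walk b b), E.IsCycle → s(u,v) ∈ E.edges → n ≤ E.length)
    (W Q : G.Walk x y) (hW : W.IsTrail) (heW : s(u,v) ∈ W.edges) (heQ : s(u,v) ∉ Q.edges) :
    n ≤ W.length + Q.length := by
  set D := W.append Q.reverse with hD
  have hcount : D.edges.count s(u,v) = 1 := by
    rw [hD, Walk.edges_append, List.count_append]
    have h1 : W.edges.count s(u,v) = 1 := List.count_eq_one_of_mem hW.edges_nodup heW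
    have h2 : Q.reverse.edges.count s(u,v) = 0 := by
      rw [List.count_eq_zero]
      simpa [Walk.edges_reverse] using heQ
    omega
  obtain ⟨c, E, hc, he, hle⟩ := cycle_from_closed_walk huv D hcount
  have := hshort c E hc he
  have hDlen : D.length = W.length + Q.length := by simp [hD]
  omega

/-- Let `C` be a shortest cycle of `G` containing the edge `e = (u,v)`,
and let `x ≠ y` be two vertices on `C`. Then `x` and `y` split `C` into two
edge-disjoint `x`–`y` paths `P = C_e` (containing `e`) and `Q = C_ē` (avoiding `e`)
whose edges are exactly those of `C`; moreover the length of `P` is the minimum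
length of an `x`–`y` path containing `e` and the length of `Q` is the minimum length
of an `x`–`y` path avoiding `e`. -/
theorem stmt_8 {V : Type*} (G : SimpleGraph V) (u v : V) (huv : G.Adj u v)
    (a : V) (C : G.Walk a a) (hC : C.IsCycle) (heC : s(u,v) ∈ C.edges)
    (hshort : ∀ (b : V) (D : G.Walk b b), D.IsCycle → s(u,v) ∈ D.edges →
      C.length ≤ D.length)
    (x y : V) (hxy : x ≠ y) (hx : x ∈ C.support) (hy : y ∈ C.support) :
    ∃ (P Q : G.Walk x y), P.IsPath ∧ Q.IsPath ∧
      s(u,v) ∈ P.edges ∧ s(u,v) ∉ Q.edges ∧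
      P.edges.Disjoint Q.edges ∧
      (∀ f : Sym2 V, f ∈ C.edges ↔ (f ∈ P.edges ∨ f ∈ Q.edges)) ∧
      P.length + Q.length = C.length ∧
      (∀ W : G.Walk x y, W.IsPath → s(u,v) ∈ W.edges → P.length ≤ W.length) ∧
      (∀ W : G.Walk x y, W.IsPath → s(u,v) ∉ W.edges → Q.length ≤ W.length) := by
  classical
  set C' := C.rotate x hx with hC'def
  have hC'cyc : C'.IsCycle := hC.rotate hx
  have hperm : C'.edges.Perm C.edges := (C.rotate_edges x hx).perm
  have hy' : y ∈ C'.support := by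
    rw [hC'def, Walk.rotate, Walk.mem_support_append_iff]
    rw [← C.take_spec hx, Walk.mem_support_append_iff] at hy
    tauto
  have hlen' : C'.length = C.length := by
    have := hperm.length_eq
    rwa [Walk.length_edges, Walk.length_edges] at this
  set P1 := C'.takeUntil y hy' with hP1def
  set Q1 := C'.dropUntil y hy' with hQ1def
  have hspec : P1.append Q1 = C' := C'.take_spec hy'
  have htail : C'.support.tail = P1.support.tail ++ Q1.support.tail := by
    have h := congrArg (List.tail ∘ Walk.support) hspec
    simp only [Function.comp_apply, Walk.support_append] at h
    rw [P1.support_eq_cons] at h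
    simpa using h.symm
  have hnd : (P1.support.tail ++ Q1.support.tail).Nodup := by
    rw [← htail]; exact hC'cyc.support_nodup
  obtain ⟨hnd1, hnd2, hdisj⟩ := List.nodup_append.mp hnd
  have hxQ : x ∈ Q1.support.tail := by
    have h := Q1.end_mem_support
    rw [Q1.support_eq_cons] at h
    rcases List.mem_cons.mp h with h | h
    · exact absurd h.symm hxy.symm
    · exact h
  have hyP : y ∈ P1.support.tail := by
    have h := P1.end_mem_support
    rw [P1.support_eq_cons] at h
    rcases List.mem_cons.mp h with h | h
    · exact absurd h hxy.symm
    · exact h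
  have hP1 : P1.IsPath := by
    apply Walk.IsPath.mk'
    rw [P1.support_eq_cons]
    exact List.nodup_cons.mpr ⟨fun hmem => hdisj x hmem x hxQ rfl, hnd1⟩
  have hQ1 : Q1.IsPath := by
    apply Walk.IsPath.mk'
    rw [Q1.support_eq_cons]
    exact List.nodup_cons.mpr ⟨fun hmem => hdisj y hyP y hmem rfl, hnd2⟩
  have hedges : C'.edges = P1.edges ++ Q1.edges := by
    rw [← hspec, Walk.edges_append]
  have hndE : (P1.edges ++ Q1.edges).Nodup := by
    rw [← hedges]; exact hC'cyc.isCircuit.isTrail.edges_nodup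
  have hEdisj : P1.edges.Disjoint Q1.edges := fun _ ha hb => (List.nodup_append.mp hndE).2.2 _ ha _ hb rfl
  have hsum : P1.length + Q1.length = C.length := by
    rw [← hlen', ← hspec, Walk.length_append]
  have heC' : s(u,v) ∈ P1.edges ∨ s(u,v) ∈ Q1.edges := by
    have : s(u,v) ∈ C'.edges := hperm.mem_iff.mpr heC
    rw [hedges, List.mem_append] at this
    exact this
  rcases heC' with heP1 | heQ1
  · refine ⟨P1, Q1.reverse, hP1, hQ1.reverse, heP1, ?_, ?_, ?_, ?_, ?_, ?_⟩
    · simpa [Walk.edges_reverse] using hEdisj heP1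
    · intro f hf hf'
      exact hEdisj hf (by simpa [Walk.edges_reverse] using hf')
    · intro f
      rw [← hperm.mem_iff, hedges, List.mem_append]
      simp [Walk.edges_reverse]
    · simpa using hsum
    · intro W hW hWe
      have hb := closed_bound huv hshort W Q1.reverse hW.isTrail hWe
        (by simpa [Walk.edges_reverse] using hEdisj heP1)
      simp only [Walk.length_reverse] at hb
      omega
    · intro W hW hWe
      have hb := closed_bound huv hshort P1 W hP1.isTrail heP1 hWe
      simp only [Walk.length_reverse]
      omega
  · refine ⟨Q1.reverse, P1, hQ1.reverse, hP1, by simpa [Walk.edges_reverse] using heQ1,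
      fun h => hEdisj h heQ1, ?_, ?_, ?_, ?_, ?_⟩
    · intro f hf hf'
      exact hEdisj hf' (by simpa [Walk.edges_reverse] using hf)
    · intro f
      rw [← hperm.mem_iff, hedges, List.mem_append]
      simp [Walk.edges_reverse]
      tauto
    · simp only [Walk.length_reverse]; omega
    · intro W hW hWe
      have hb := closed_bound huv hshort W P1 hW.isTrail hWe (fun h => hEdisj h heQ1)
      simp only [Walk.length_reverse]
      omega
    · intro W hW hWe
      have hb := closed_bound huv hshort Q1.reverse W hQ1.reverse.isTrail
        (by simpa [Walk.edges_reverse] using heQ1) hWe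
      simp only [Walk.length_reverse] at hb ⊢
      omega
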